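/- Let U : ℝ → ℝ^{n×r}, V : ℝ → ℝ^{m×r} be C¹ solutions of the Euclidean gradient flow U̇ = −∇_U E, V̇ = −∇_V E with E(U,V) = L(UVᵀ), L ∈ C¹. Then for every symmetric matrix A ∈ ℝ^{r×r}, the function t ↦ ⟨U, UA⟩ − ⟨V, VA⟩ is constant, where ⟨M,N⟩ = Tr(MᵀN). Equivalently, UᵀU − VᵀV is constant in time. -/

import Mathlib

open Matrix

/-- Balancedness conservation for the Euclidean gradient flow of a two-layer linear
network: if `U̇ = -∇_U E`, `V̇ = -∇_V E` with `E (U, V) = L (U Vᵀ)` (`G` the gradient of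
`L` for the Frobenius inner product), then `UᵀU - VᵀV` is constant in time; equivalently,
for every symmetric `A`, `⟨U, U A⟩ - ⟨V, V A⟩` is constant. -/
theorem stmt19 {n m r : ℕ}
    (L : Matrix (Fin n) (Fin m) ℝ → ℝ)
    (G : Matrix (Fin n) (Fin m) ℝ → Matrix (Fin n) (Fin m) ℝ)
    (hG : ∀ M H : Matrix (Fin n) (Fin m) ℝ,
      HasDerivAt (fun s : ℝ => L (M + s • H)) (Matrix.trace ((G M)ᵀ * H)) 0)
    (U U' : ℝ → Matrix (Fin n) (Fin r) ℝ)
    (V V' : ℝ → Matrix (Fin m) (Fin r) ℝ)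
    (hU : ∀ i j t, HasDerivAt (fun t => U t i j) (U' t i j) t)
    (hV : ∀ i j t, HasDerivAt (fun t => V t i j) (V' t i j) t)
    (odeU : ∀ t, U' t = -(G (U t * (V t)ᵀ) * V t))
    (odeV : ∀ t, V' t = -((G (U t * (V t)ᵀ))ᵀ * U t)) :
    (∀ A : Matrix (Fin r) (Fin r) ℝ, Aᵀ = A →
      ∀ t s : ℝ,
        Matrix.trace ((U t)ᵀ * (U t * A)) - Matrix.trace ((V t)ᵀ * (V t * A))
          = Matrix.trace ((U s)ᵀ * (U s * A)) - Matrix.trace ((V s)ᵀ * (V s * A))) ∧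
    (∀ t s : ℝ, (U t)ᵀ * U t - (V t)ᵀ * V t = (U s)ᵀ * U s - (V s)ᵀ * V s) := by
  -- the matrix-valued derivative of UᵀU - VᵀV vanishes
  have key : ∀ t, ((U' t)ᵀ * U t + (U t)ᵀ * U' t)
      - ((V' t)ᵀ * V t + (V t)ᵀ * V' t) = 0 := by
    intro t
    rw [odeU, odeV]
    simp only [Matrix.transpose_neg, Matrix.transpose_mul, Matrix.transpose_transpose,
      Matrix.neg_mul, Matrix.mul_neg, Matrix.mul_assoc]
    abel
  -- entrywise derivative of (UᵀU - VᵀV) i j at every time is 0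
  have hderiv : ∀ (i j : Fin r) (t : ℝ),
      HasDerivAt (fun t => ((U t)ᵀ * U t - (V t)ᵀ * V t) i j) 0 t := by
    intro i j t
    have h1 : HasDerivAt (fun t => ((U t)ᵀ * U t) i j)
        (((U' t)ᵀ * U t + (U t)ᵀ * U' t) i j) t := by
      simp only [Matrix.mul_apply, Matrix.transpose_apply, Matrix.add_apply]
      rw [← Finset.sum_add_distrib]
      exact HasDerivAt.fun_sum fun k _ => (hU k i t).mul (hU k j t)
    have h2 : HasDerivAt (fun t => ((V t)ᵀ * V t) i j)
        (((V' t)ᵀ * V t + (V t)ᵀ * V' t) i j) t := by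
      simp only [Matrix.mul_apply, Matrix.transpose_apply, Matrix.add_apply]
      rw [← Finset.sum_add_distrib]
      exact HasDerivAt.fun_sum fun k _ => (hV k i t).mul (hV k j t)
    have := h1.fun_sub h2
    have hz : (((U' t)ᵀ * U t + (U t)ᵀ * U' t) i j)
        - (((V' t)ᵀ * V t + (V t)ᵀ * V' t) i j) = 0 := by
      have := congrFun (congrFun (key t) i) j
      simpa [Matrix.sub_apply] using this
    rw [hz] at this
    simpa [Matrix.sub_apply] using this
  -- hence UᵀU - VᵀV is constant
  have hconst : ∀ t s : ℝ,
      (U t)ᵀ * U t - (V t)ᵀ * V t = (U s)ᵀ * U s - (V s)ᵀ * V s := by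
    intro t s
    ext i j
    have hd : Differentiable ℝ (fun t => ((U t)ᵀ * U t - (V t)ᵀ * V t) i j) :=
      fun x => (hderiv i j x).differentiableAt
    have h0 : ∀ x, deriv (fun t => ((U t)ᵀ * U t - (V t)ᵀ * V t) i j) x = 0 :=
      fun x => (hderiv i j x).deriv
    exact is_const_of_deriv_eq_zero hd h0 t s
  refine ⟨?_, hconst⟩
  intro A _ t s
  rw [← Matrix.mul_assoc, ← Matrix.mul_assoc, ← Matrix.trace_sub, ← Matrix.sub_mul,
    hconst t s, Matrix.sub_mul, Matrix.trace_sub, Matrix.mul_assoc, Matrix.mul_assoc]
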